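/- The number of triangular lattice points contained in a closed equiangular hexagon with side lengths alternating k and k+1 (a (k, k+1)-equiangular hexagon with vertices at lattice points) is 3(k+1)². -/

import Mathlib

/-- Triangular lattice point a•(1,0) + b•(1/2, √3/2). -/
noncomputable def tri (a b : ℤ) : ℝ × ℝ :=
  ((a : ℝ) + (b : ℝ) / 2, (b : ℝ) * Real.sqrt 3 / 2)

/-- Squared Euclidean distance in the plane. -/
def sqd (p q : ℝ × ℝ) : ℝ := (p.1 - q.1) ^ 2 + (p.2 - q.2) ^ 2

/-- The triangular lattice. -/
noncomputable def triLattice : Set (ℝ × ℝ) := {p | ∃ a b : ℤ, p = tri a b}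

/-- Closed regular hexagon of side `k` centered at the origin with a vertex at `(k,0)`. -/
noncomputable def hexR (k : ℤ) : Set (ℝ × ℝ) :=
  convexHull ℝ ({tri k 0, tri 0 k, tri (-k) k, tri (-k) 0, tri 0 (-k), tri k (-k)} : Set (ℝ × ℝ))

/-- Closed (k, k+1)-equiangular hexagon with vertices at lattice points. -/
noncomputable def hexE (k : ℤ) : Set (ℝ × ℝ) :=
  convexHull ℝ ({tri k 0, tri k (k+1), tri 0 (2*k+1), tri (-(k+1)) (2*k+1),
    tri (-(k+1)) (k+1), tri 0 0} : Set (ℝ × ℝ))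

/-- Set of squared distances between distinct points of `X`. -/
def sqdSet (X : Set (ℝ × ℝ)) : Set ℝ := {d | ∃ p ∈ X, ∃ q ∈ X, p ≠ q ∧ d = sqd p q}

/-! ### Auxiliary material -/

/-- The linear map sending the standard lattice to the triangular lattice. -/
noncomputable def fmap : ℝ × ℝ → ℝ × ℝ := fun p => (p.1 + p.2 / 2, p.2 * Real.sqrt 3 / 2)

lemma fmap_linear : IsLinearMap ℝ fmap := by
  constructor
  · intro p q
    simp only [fmap, Prod.fst_add, Prod.snd_add, Prod.mk_add_mk, Prod.mk.injEq]
    constructor <;> ring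
  · intro c p
    simp only [fmap, Prod.smul_fst, Prod.smul_snd, smul_eq_mul, Prod.smul_mk, Prod.mk.injEq]
    constructor <;> ring

lemma sqrt3_pos : (0:ℝ) < Real.sqrt 3 := Real.sqrt_pos.mpr (by norm_num)

lemma fmap_inj : Function.Injective fmap := by
  intro p q h
  have h1 := congrArg Prod.fst h
  have h2 := congrArg Prod.snd h
  simp only [fmap] at h1 h2
  have h3 : p.2 = q.2 := by
    have := sqrt3_pos
    field_simp at h2
    exact h2
  have h4 : p.1 = q.1 := by
    rw [h3] at h1; linarith
  exact Prod.ext h4 h3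

/-- Point given by parameter t on a segment. -/
lemma seg_param (p q : ℝ × ℝ) (t : ℝ) (h0 : 0 ≤ t) (h1 : t ≤ 1) :
    (1 - t) • p + t • q ∈ segment ℝ p q :=
  ⟨1 - t, t, by linarith, h0, by ring, rfl⟩

lemma mem_horiz {a b x y : ℝ} (h1 : a ≤ x) (h2 : x ≤ b) :
    ((x, y) : ℝ × ℝ) ∈ segment ℝ (a, y) (b, y) := by
  rcases eq_or_lt_of_le (h1.trans h2) with h | h
  · have hx : x = a := le_antisymm (h ▸ h2) h1
    subst hx
    exact left_mem_segment ℝ _ _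
  · have hba : b - a ≠ 0 := by linarith
    refine ⟨(b - x) / (b - a), (x - a) / (b - a), div_nonneg (by linarith) (by linarith),
      div_nonneg (by linarith) (by linarith), ?_, ?_⟩
    · rw [← add_div]; field_simp; ring
    · simp only [Prod.smul_mk, smul_eq_mul, Prod.mk_add_mk, Prod.mk.injEq]
      constructor
      · field_simp; ring
      · field_simp; ring

/-- The equiangular hexagon in lattice coordinates, as an intersection of half planes. -/
def Hset (k : ℕ) : Set (ℝ × ℝ) :=
  {p | 0 ≤ p.2 ∧ p.2 ≤ 2*k+1 ∧ -(k:ℝ)-1 ≤ p.1 ∧ p.1 ≤ k ∧ 0 ≤ p.1 + p.2 ∧ p.1 + p.2 ≤ 2*k+1}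

lemma convex_Hset (k : ℕ) : Convex ℝ (Hset k) := by
  intro p hp q hq a b ha hb hab
  obtain ⟨h1, h2, h3, h4, h5, h6⟩ := hp
  obtain ⟨g1, g2, g3, g4, g5, g6⟩ := hq
  simp only [Hset, Set.mem_setOf_eq, Prod.fst_add, Prod.snd_add, Prod.smul_fst, Prod.smul_snd,
    smul_eq_mul]
  refine ⟨?_, ?_, ?_, ?_, ?_, ?_⟩
  · nlinarith [mul_nonneg ha h1, mul_nonneg hb g1]
  · nlinarith [mul_le_mul_of_nonneg_left h2 ha, mul_le_mul_of_nonneg_left g2 hb]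
  · nlinarith [mul_le_mul_of_nonneg_left h3 ha, mul_le_mul_of_nonneg_left g3 hb]
  · nlinarith [mul_le_mul_of_nonneg_left h4 ha, mul_le_mul_of_nonneg_left g4 hb]
  · nlinarith [mul_nonneg ha h5, mul_nonneg hb g5]
  · nlinarith [mul_le_mul_of_nonneg_left h6 ha, mul_le_mul_of_nonneg_left g6 hb]

lemma hull_eq (k : ℕ) :
    convexHull ℝ ({((k:ℝ), 0), ((k:ℝ), (k:ℝ)+1), (0, 2*(k:ℝ)+1), (-(k:ℝ)-1, 2*(k:ℝ)+1),
      (-(k:ℝ)-1, (k:ℝ)+1), (0, 0)} : Set (ℝ × ℝ)) = Hset k := by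
  have hK : (0:ℝ) ≤ (k:ℝ) := Nat.cast_nonneg k
  apply le_antisymm
  · apply convexHull_min _ (convex_Hset k)
    intro p hp
    simp only [Set.mem_insert_iff, Set.mem_singleton_iff] at hp
    rcases hp with rfl | rfl | rfl | rfl | rfl | rfl <;>
      refine ⟨?_, ?_, ?_, ?_, ?_, ?_⟩ <;> simp only [] <;> norm_num <;> linarith
  · intro p hp
    obtain ⟨h1, h2, h3, h4, h5, h6⟩ := hp
    set V : Set (ℝ × ℝ) := {((k:ℝ), 0), ((k:ℝ), (k:ℝ)+1), (0, 2*(k:ℝ)+1), (-(k:ℝ)-1, 2*(k:ℝ)+1),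
      (-(k:ℝ)-1, (k:ℝ)+1), (0, 0)} with hV
    have hconv := convex_convexHull ℝ V
    have m1 : ((k:ℝ), 0) ∈ convexHull ℝ V := subset_convexHull ℝ V (by simp [hV])
    have m2 : ((k:ℝ), (k:ℝ)+1) ∈ convexHull ℝ V := subset_convexHull ℝ V (by simp [hV])
    have m3 : ((0:ℝ), 2*(k:ℝ)+1) ∈ convexHull ℝ V := subset_convexHull ℝ V (by simp [hV])
    have m4 : (-(k:ℝ)-1, 2*(k:ℝ)+1) ∈ convexHull ℝ V := subset_convexHull ℝ V (by simp [hV])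
    have m5 : (-(k:ℝ)-1, (k:ℝ)+1) ∈ convexHull ℝ V := subset_convexHull ℝ V (by simp [hV])
    have m6 : ((0:ℝ), 0) ∈ convexHull ℝ V := subset_convexHull ℝ V (by simp [hV])
    by_cases hy : p.2 ≤ (k:ℝ) + 1
    · set t : ℝ := p.2 / ((k:ℝ) + 1) with ht
      have ht0 : 0 ≤ t := by positivity
      have ht1 : t ≤ 1 := by rw [ht]; rw [div_le_one (by linarith)]; linarith
      have hL : (-p.2, p.2) ∈ convexHull ℝ V := by
        have := seg_param ((0:ℝ), 0) (-(k:ℝ)-1, (k:ℝ)+1) t ht0 ht1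
        have he : (1 - t) • ((0:ℝ), (0:ℝ)) + t • (-(k:ℝ)-1, (k:ℝ)+1) = (-p.2, p.2) := by
          simp only [Prod.smul_mk, smul_eq_mul, Prod.mk_add_mk, Prod.mk.injEq, ht]
          constructor <;> (field_simp; try ring)
        rw [he] at this
        exact hconv.segment_subset m6 m5 this
      have hR : ((k:ℝ), p.2) ∈ convexHull ℝ V := by
        have := seg_param ((k:ℝ), 0) ((k:ℝ), (k:ℝ)+1) t ht0 ht1
        have he : (1 - t) • ((k:ℝ), (0:ℝ)) + t • ((k:ℝ), (k:ℝ)+1) = ((k:ℝ), p.2) := by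
          simp only [Prod.smul_mk, smul_eq_mul, Prod.mk_add_mk, Prod.mk.injEq, ht]
          constructor <;> (field_simp; try ring)
        rw [he] at this
        exact hconv.segment_subset m1 m2 this
      have hseg : p ∈ segment ℝ (-p.2, p.2) ((k:ℝ), p.2) := by
        have := mem_horiz (a := -p.2) (b := (k:ℝ)) (x := p.1) (y := p.2) (by linarith) h4
        simpa using this
      exact hconv.segment_subset hL hR hseg
    · push_neg at hy
      have hKpos : (0:ℝ) < (k:ℝ) := by linarith
      set t : ℝ := (p.2 - ((k:ℝ) + 1)) / (k:ℝ) with ht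
      have ht0 : 0 ≤ t := div_nonneg (by linarith) hKpos.le
      have ht1 : t ≤ 1 := by rw [ht, div_le_one hKpos]; linarith
      have hL : (-(k:ℝ)-1, p.2) ∈ convexHull ℝ V := by
        have := seg_param (-(k:ℝ)-1, (k:ℝ)+1) (-(k:ℝ)-1, 2*(k:ℝ)+1) t ht0 ht1
        have he : (1 - t) • (-(k:ℝ)-1, (k:ℝ)+1) + t • (-(k:ℝ)-1, 2*(k:ℝ)+1) = (-(k:ℝ)-1, p.2) := by
          simp only [Prod.smul_mk, smul_eq_mul, Prod.mk_add_mk, Prod.mk.injEq, ht]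
          constructor <;> (field_simp; try ring)
        rw [he] at this
        exact hconv.segment_subset m5 m4 this
      have hR : (2*(k:ℝ)+1-p.2, p.2) ∈ convexHull ℝ V := by
        have := seg_param ((k:ℝ), (k:ℝ)+1) ((0:ℝ), 2*(k:ℝ)+1) t ht0 ht1
        have he : (1 - t) • ((k:ℝ), (k:ℝ)+1) + t • ((0:ℝ), 2*(k:ℝ)+1) = (2*(k:ℝ)+1-p.2, p.2) := by
          simp only [Prod.smul_mk, smul_eq_mul, Prod.mk_add_mk, Prod.mk.injEq, ht]
          constructor <;> (field_simp; try ring)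
        rw [he] at this
        exact hconv.segment_subset m2 m3 this
      have hseg : p ∈ segment ℝ (-(k:ℝ)-1, p.2) (2*(k:ℝ)+1-p.2, p.2) := by
        have := mem_horiz (a := -(k:ℝ)-1) (b := 2*(k:ℝ)+1-p.2) (x := p.1) (y := p.2) h3
          (by linarith)
        simpa using this
      exact hconv.segment_subset hL hR hseg

lemma tri_fmap (a b : ℤ) : tri a b = fmap ((a:ℝ), (b:ℝ)) := rfl

lemma hexE_eq (k : ℕ) : hexE (k : ℤ) = fmap '' Hset k := by
  rw [← hull_eq k, fmap_linear.image_convexHull]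
  unfold hexE
  congr 1
  simp only [Set.image_insert_eq, Set.image_singleton]
  rw [tri_fmap, tri_fmap, tri_fmap, tri_fmap, tri_fmap, tri_fmap]
  push_cast
  ring_nf

lemma mem_hexE_iff (k : ℕ) (a b : ℤ) :
    tri a b ∈ hexE (k : ℤ) ↔
      0 ≤ b ∧ b ≤ 2*k+1 ∧ -(k:ℤ)-1 ≤ a ∧ a ≤ k ∧ 0 ≤ a + b ∧ a + b ≤ 2*k+1 := by
  rw [hexE_eq, tri_fmap, fmap_inj.mem_set_image]
  simp only [Hset, Set.mem_setOf_eq]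
  constructor
  · rintro ⟨h1, h2, h3, h4, h5, h6⟩
    refine ⟨by exact_mod_cast h1, by exact_mod_cast h2, by exact_mod_cast h3,
      by exact_mod_cast h4, by exact_mod_cast h5, by exact_mod_cast h6⟩
  · rintro ⟨h1, h2, h3, h4, h5, h6⟩
    refine ⟨by exact_mod_cast h1, by exact_mod_cast h2, by exact_mod_cast h3,
      by exact_mod_cast h4, by exact_mod_cast h5, by exact_mod_cast h6⟩

/-- The lattice points of the hexagon, in lattice coordinates. -/
noncomputable def Fgrid (k : ℕ) : Finset (ℤ × ℤ) :=
  (Finset.range (2*k+2)).biUnion fun b =>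
    (Finset.Icc (max (-(k:ℤ)-1) (-(b:ℤ))) (min (k:ℤ) (2*(k:ℤ)+1-(b:ℤ)))).image fun a => (a, (b:ℤ))

lemma mem_Fgrid (k : ℕ) (a b : ℤ) :
    (a, b) ∈ Fgrid k ↔
      0 ≤ b ∧ b ≤ 2*k+1 ∧ -(k:ℤ)-1 ≤ a ∧ a ≤ k ∧ 0 ≤ a + b ∧ a + b ≤ 2*k+1 := by
  simp only [Fgrid, Finset.mem_biUnion, Finset.mem_image, Finset.mem_Icc, Finset.mem_range,
    Prod.mk.injEq, le_min_iff, max_le_iff]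
  constructor
  · rintro ⟨b', hb', a', ⟨⟨h1, h2⟩, h3, h4⟩, rfl, rfl⟩
    omega
  · rintro ⟨h1, h2, h3, h4, h5, h6⟩
    exact ⟨b.toNat, by omega, a, ⟨⟨by omega, by omega⟩, by omega, by omega⟩, rfl, by omega⟩

lemma card_Fgrid (k : ℕ) : (Fgrid k).card = 3 * (k + 1) ^ 2 := by
  rw [Fgrid, Finset.card_biUnion]
  · have hrow : ∀ b ∈ Finset.range (2*k+2),
        ((Finset.Icc (max (-(k:ℤ)-1) (-(b:ℤ))) (min (k:ℤ) (2*(k:ℤ)+1-(b:ℤ)))).image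
          (fun a => (a, (b:ℤ)))).card = if b ≤ k then k+1+b else 3*k+3-b := by
      intro b hb
      rw [Finset.card_image_of_injective _ (fun a₁ a₂ h => (Prod.mk.injEq _ _ _ _).mp h |>.1),
        Int.card_Icc]
      simp only [Finset.mem_range] at hb
      split_ifs <;> omega
    rw [Finset.sum_congr rfl hrow]
    rw [show 2*k+2 = (k+1) + (k+1) by ring,
      ← Finset.sum_range_add_sum_Ico _ (by omega : k+1 ≤ (k+1)+(k+1)),
      Finset.sum_Ico_eq_sum_range]
    simp only [show (k+1)+(k+1) - (k+1) = k+1 by omega]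
    rw [← Finset.sum_add_distrib]
    have hconst : ∀ b ∈ Finset.range (k+1),
        ((if b ≤ k then k+1+b else 3*k+3-b) +
          (if k+1+b ≤ k then k+1+(k+1+b) else 3*k+3-(k+1+b))) = 3*k+3 := by
      intro b hb
      have := Finset.mem_range.mp hb
      split_ifs <;> omega
    rw [Finset.sum_congr rfl hconst, Finset.sum_const, Finset.card_range, smul_eq_mul]
    ring
  · intro i _ j _ hij
    simp only [Finset.disjoint_left, Finset.mem_image]
    rintro p ⟨a, _, rfl⟩ ⟨a', _, h⟩
    have h2 : (j:ℤ) = (i:ℤ) := ((Prod.mk.injEq _ _ _ _).mp h).2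
    exact hij (by exact_mod_cast h2.symm)

lemma tri_pair_inj : Function.Injective (fun q : ℤ × ℤ => tri q.1 q.2) := by
  intro p q h
  simp only [tri_fmap] at h
  have := fmap_inj h
  have h1 : (p.1 : ℝ) = q.1 := congrArg Prod.fst this
  have h2 : (p.2 : ℝ) = q.2 := congrArg Prod.snd this
  exact Prod.ext (by exact_mod_cast h1) (by exact_mod_cast h2)

theorem equiangular_hexagon_lattice_count (k : ℕ) :
    (triLattice ∩ hexE (k : ℤ)).ncard = 3 * (k + 1) ^ 2 := by
  have hset : triLattice ∩ hexE (k : ℤ) = (fun q : ℤ × ℤ => tri q.1 q.2) '' ↑(Fgrid k) := by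
    ext p
    constructor
    · rintro ⟨⟨a, b, rfl⟩, hp⟩
      exact ⟨(a, b), by simpa [mem_Fgrid] using (mem_hexE_iff k a b).mp hp, rfl⟩
    · rintro ⟨⟨a, b⟩, hq, rfl⟩
      simp only [Finset.mem_coe, mem_Fgrid] at hq
      exact ⟨⟨a, b, rfl⟩, (mem_hexE_iff k a b).mpr hq⟩
  rw [hset, Set.ncard_image_of_injective _ tri_pair_inj, Set.ncard_coe_finset, card_Fgrid]
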